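/- Define the Hermitian 8×8 matrices Hⱼ = [[0, Qⱼ],[Qⱼ*, 0]] for j = 1,2,3,4 (with Q₁,…,Q₄ the explicit quaternionic unit matrices of the previous construction) and H₅ = [[I₄, 0],[0, −I₄]]. Then every nonzero real linear combination c₁H₁ + ⋯ + c₅H₅ is a Hermitian matrix with exactly 4 positive and 4 negative eigenvalues. -/

import Mathlib

open Matrix Complex

noncomputable def Q1 : Matrix (Fin 4) (Fin 4) ℂ :=
  !![0, 0, 1, 0; 0, 0, 0, 1; -1, 0, 0, 0; 0, -1, 0, 0]

noncomputable def Q2 : Matrix (Fin 4) (Fin 4) ℂ :=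
  !![0, 0, I, 0; 0, 0, 0, -I; I, 0, 0, 0; 0, -I, 0, 0]

noncomputable def Q3 : Matrix (Fin 4) (Fin 4) ℂ :=
  !![0, 0, 0, 1; 0, 0, -1, 0; 0, 1, 0, 0; -1, 0, 0, 0]

noncomputable def Q4 : Matrix (Fin 4) (Fin 4) ℂ :=
  !![0, 0, 0, I; 0, 0, I, 0; 0, I, 0, 0; I, 0, 0, 0]

noncomputable def Hmat : Fin 5 → Matrix (Fin 4 ⊕ Fin 4) (Fin 4 ⊕ Fin 4) ℂ :=
  ![Matrix.fromBlocks 0 Q1 Q1ᴴ 0,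
    Matrix.fromBlocks 0 Q2 Q2ᴴ 0,
    Matrix.fromBlocks 0 Q3 Q3ᴴ 0,
    Matrix.fromBlocks 0 Q4 Q4ᴴ 0,
    Matrix.fromBlocks 1 0 0 (-1)]

namespace Stmt11Aux

lemma Q1_ct : Q1ᴴ = -Q1 := by
  ext i j; fin_cases i <;> fin_cases j <;> simp [Q1, Matrix.vecHead, Matrix.vecTail]
lemma Q2_ct : Q2ᴴ = -Q2 := by
  ext i j; fin_cases i <;> fin_cases j <;> simp [Q2, Matrix.vecHead, Matrix.vecTail]
lemma Q3_ct : Q3ᴴ = -Q3 := by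
  ext i j; fin_cases i <;> fin_cases j <;> simp [Q3, Matrix.vecHead, Matrix.vecTail]
lemma Q4_ct : Q4ᴴ = -Q4 := by
  ext i j; fin_cases i <;> fin_cases j <;> simp [Q4, Matrix.vecHead, Matrix.vecTail]

noncomputable def Qc (a b d e : ℝ) : Matrix (Fin 4) (Fin 4) ℂ :=
  (a:ℂ) • Q1 + (b:ℂ) • Q2 + (d:ℂ) • Q3 + (e:ℂ) • Q4

lemma Qc_mul_Qc (a b d e : ℝ) :
    Qc a b d e * Qc a b d e = (-(((a^2+b^2+d^2+e^2 : ℝ)) : ℂ)) • 1 := by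
  unfold Qc
  ext i j
  fin_cases i <;> fin_cases j <;>
    simp [Q1, Q2, Q3, Q4, mul_apply, Fin.sum_univ_succ, Matrix.one_apply] <;>
    ring_nf <;> simp [Complex.I_sq] <;> ring

lemma Qc_ct (a b d e : ℝ) : (Qc a b d e)ᴴ = -Qc a b d e := by
  unfold Qc
  simp only [Matrix.conjTranspose_add, Matrix.conjTranspose_smul, Q1_ct, Q2_ct, Q3_ct, Q4_ct,
    Complex.star_def, Complex.conj_ofReal, smul_neg]
  abel

lemma M_block (c : Fin 5 → ℝ) :
    (∑ j, (c j : ℂ) • Hmat j) =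
      Matrix.fromBlocks ((c 4 : ℂ) • 1) (Qc (c 0) (c 1) (c 2) (c 3))
        (Qc (c 0) (c 1) (c 2) (c 3))ᴴ (-((c 4 : ℂ) • 1)) := by
  rw [Qc_ct]
  simp only [Fin.sum_univ_five, Hmat]
  simp only [Matrix.cons_val_zero, Matrix.cons_val_one, Matrix.head_cons,
    Matrix.cons_val_two, Matrix.tail_cons, Matrix.cons_val_three, Matrix.cons_val_four,
    Matrix.cons_val_succ]
  simp only [Matrix.fromBlocks_smul, Matrix.fromBlocks_add, Matrix.fromBlocks_inj]
  refine ⟨by simp, ?_, ?_, by simp⟩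
  · simp [Qc]
  · simp only [Q1_ct, Q2_ct, Q3_ct, Q4_ct, smul_neg, smul_zero, add_zero, Qc]
    abel

lemma M_sq (c : Fin 5 → ℝ) :
    (∑ j, (c j : ℂ) • Hmat j) * (∑ j, (c j : ℂ) • Hmat j) =
      (((∑ j, (c j)^2 : ℝ)) : ℂ) • 1 := by
  rw [M_block, Qc_ct, Matrix.fromBlocks_multiply]
  have hq := Qc_mul_Qc (c 0) (c 1) (c 2) (c 3)
  have e : (((∑ j, (c j)^2 : ℝ)) : ℂ) • (1 : Matrix (Fin 4 ⊕ Fin 4) (Fin 4 ⊕ Fin 4) ℂ) =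
      Matrix.fromBlocks ((((∑ j, (c j)^2 : ℝ)) : ℂ) • 1) 0 0 ((((∑ j, (c j)^2 : ℝ)) : ℂ) • 1) := by
    rw [← Matrix.fromBlocks_one, Matrix.fromBlocks_smul, smul_zero]
  rw [e, Matrix.fromBlocks_inj]
  refine ⟨?_, ?_, ?_, ?_⟩ <;>
    · simp only [Matrix.mul_neg, Matrix.neg_mul, hq, neg_neg, Matrix.mul_one, smul_mul_assoc, Matrix.mul_smul, Matrix.one_mul,
        Fin.sum_univ_five]
      push_cast
      module

lemma M_herm (c : Fin 5 → ℝ) : (∑ j, (c j : ℂ) • Hmat j).IsHermitian := by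
  rw [M_block]
  show _ᴴ = _
  rw [Matrix.fromBlocks_conjTranspose, Matrix.fromBlocks_inj]
  refine ⟨?_, ?_, ?_, ?_⟩ <;>
    simp [Matrix.conjTranspose_smul, Complex.star_def, Matrix.conjTranspose_one]

lemma M_trace (c : Fin 5 → ℝ) : (∑ j, (c j : ℂ) • Hmat j).trace = 0 := by
  rw [M_block]
  simp [Matrix.trace, Matrix.diag, Fintype.sum_sum_type, Matrix.fromBlocks_apply₁₁,
    Matrix.fromBlocks_apply₂₂, Matrix.one_apply]


end Stmt11Aux

open Stmt11Aux in
/-- Every nonzero real linear combination of the Hermitian `8×8` matrices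
`H₁,…,H₅` has exactly 4 positive and 4 negative eigenvalues. -/
theorem stmt11 (c : Fin 5 → ℝ) (hc : c ≠ 0)
    (M : Matrix (Fin 4 ⊕ Fin 4) (Fin 4 ⊕ Fin 4) ℂ)
    (hM : M = ∑ j, (c j : ℂ) • Hmat j) :
    ∃ hHerm : M.IsHermitian,
      (Finset.univ.filter fun i => 0 < hHerm.eigenvalues i).card = 4 ∧
      (Finset.univ.filter fun i => hHerm.eigenvalues i < 0).card = 4 := by
  have hHerm : M.IsHermitian := hM ▸ M_herm c
  refine ⟨hHerm, ?_⟩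
  set s : ℝ := ∑ j, (c j)^2 with hs
  have hMM : M * M = ((s : ℝ) : ℂ) • 1 := by rw [hs, hM]; exact M_sq c
  have hMtr : M.trace = 0 := hM ▸ M_trace c
  have hspos : 0 < s := by
    have hex : ∃ j, c j ≠ 0 := by
      by_contra h
      push_neg at h
      exact hc (funext h)
    obtain ⟨j, hj⟩ := hex
    exact Finset.sum_pos' (fun i _ => sq_nonneg _) ⟨j, Finset.mem_univ j, by positivity⟩
  set r : ℝ := Real.sqrt s with hr
  have hrpos : 0 < r := Real.sqrt_pos.mpr hspos
  have hrr : r * r = s := Real.mul_self_sqrt hspos.le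
  -- each eigenvalue is r or -r
  have heig : ∀ i, hHerm.eigenvalues i = r ∨ hHerm.eigenvalues i = -r := by
    intro i
    set t := hHerm.eigenvalues i with ht
    have hv := hHerm.mulVec_eigenvectorBasis i
    have hvne : ⇑(hHerm.eigenvectorBasis i) ≠ (0 : (Fin 4 ⊕ Fin 4) → ℂ) := by
      have h0 := hHerm.eigenvectorBasis.orthonormal.ne_zero i
      intro h
      apply h0
      ext k
      exact congrFun h k
    obtain ⟨k, hk⟩ := Function.ne_iff.mp hvne
    have h2 : ((s : ℝ) : ℂ) • ⇑(hHerm.eigenvectorBasis i) =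
        (t * t) • ⇑(hHerm.eigenvectorBasis i) := by
      have : (M * M) *ᵥ ⇑(hHerm.eigenvectorBasis i) =
          (t * t) • ⇑(hHerm.eigenvectorBasis i) := by
        rw [← Matrix.mulVec_mulVec, hv, Matrix.mulVec_smul, hv, smul_smul]
      rwa [hMM, Matrix.smul_mulVec, Matrix.one_mulVec] at this
    have h3 : (((s : ℝ) : ℂ) - ((t * t : ℝ) : ℂ)) * (⇑(hHerm.eigenvectorBasis i) : (Fin 4 ⊕ Fin 4) → ℂ) k = 0 := by
      have h4 := congrFun h2 k
      simp only [Pi.smul_apply, smul_eq_mul, Complex.real_smul] at h4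
      push_cast at h4 ⊢
      linear_combination h4
    rcases mul_eq_zero.mp h3 with h | h
    · have h5 : t * t = s := by
        have h6 := sub_eq_zero.mp h
        exact_mod_cast h6.symm
      have h7 : (t - r) * (t + r) = 0 := by nlinarith
      rcases mul_eq_zero.mp h7 with h8 | h8
      · left; linarith
      · right; linarith
    · exact absurd h hk
  -- sum of eigenvalues is zero
  have hsum : ∑ i, hHerm.eigenvalues i = 0 := by
    have htr : M.trace = ∑ i, (hHerm.eigenvalues i : ℂ) := by
      conv_lhs => rw [hHerm.spectral_theorem, Unitary.conjStarAlgAut_apply]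
      rw [Matrix.trace_mul_cycle]
      rw [show (star (hHerm.eigenvectorUnitary : Matrix (Fin 4 ⊕ Fin 4) (Fin 4 ⊕ Fin 4) ℂ)) *
          (hHerm.eigenvectorUnitary : Matrix (Fin 4 ⊕ Fin 4) (Fin 4 ⊕ Fin 4) ℂ) = 1 from
        Unitary.coe_star_mul_self _]
      simp [Matrix.trace_diagonal]
    rw [hMtr] at htr
    have hc0 : ((∑ i, hHerm.eigenvalues i : ℝ) : ℂ) = 0 := by push_cast; exact htr.symm
    exact_mod_cast hc0
  -- counting
  set P := Finset.univ.filter fun i => 0 < hHerm.eigenvalues i with hP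
  set N := Finset.univ.filter fun i => hHerm.eigenvalues i < 0 with hN
  have hPr : ∀ i ∈ P, hHerm.eigenvalues i = r := by
    intro i hi
    rcases heig i with h | h
    · exact h
    · rw [hP, Finset.mem_filter] at hi; linarith [hi.2]
  have hNr : ∀ i ∈ N, hHerm.eigenvalues i = -r := by
    intro i hi
    rcases heig i with h | h
    · rw [hN, Finset.mem_filter] at hi; linarith [hi.2]
    · exact h
  have hdisj : Disjoint P N := by
    rw [Finset.disjoint_left]
    intro i hiP hiN
    rw [hP, Finset.mem_filter] at hiP
    rw [hN, Finset.mem_filter] at hiN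
    linarith [hiP.2, hiN.2]
  have hunion : P ∪ N = Finset.univ := by
    ext i
    simp only [hP, hN, Finset.mem_union, Finset.mem_filter, Finset.mem_univ, true_and, iff_true]
    rcases heig i with h | h
    · left; rw [h]; exact hrpos
    · right; rw [h]; linarith
  have hcard : P.card + N.card = 8 := by
    rw [← Finset.card_union_of_disjoint hdisj, hunion]
    simp
  have hsum2 : (P.card : ℝ) * r - (N.card : ℝ) * r = 0 := by
    have h1 : ∑ i ∈ P, hHerm.eigenvalues i = P.card * r := by
      rw [Finset.sum_congr rfl hPr, Finset.sum_const, nsmul_eq_mul]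
    have h2 : ∑ i ∈ N, hHerm.eigenvalues i = -((N.card : ℝ) * r) := by
      rw [Finset.sum_congr rfl hNr, Finset.sum_const, nsmul_eq_mul]
      ring
    have h3 := hsum
    rw [← hunion, Finset.sum_union hdisj, h1, h2] at h3
    linarith
  have hPN : P.card = N.card := by
    have h1 : ((P.card : ℝ) - N.card) * r = 0 := by linarith
    have h2 := (mul_eq_zero.mp h1).resolve_right hrpos.ne'
    have h3 : (P.card : ℝ) = N.card := by linarith
    exact_mod_cast h3
  exact ⟨by omega, by omega⟩
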